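/- For the bisection-auction tiling T_{k,0} and the function A_k: the average-case PAR with respect to party 1 equals (k+3)/4 − (k−1)/2^{k+2}, the average-case PAR with respect to party 2 equals (k+5)/4 + (k−1)/2^{k+2}, and hence the average-case subjective PAR of T_{k,0} equals (k+5)/4 + (k−1)/2^{k+2}. -/

import Mathlib

open Finset

/-- The value space `{0,…,2^k−1} × {0,…,2^k−1}`. -/
def Vk (k : ℕ) : Finset (ℕ × ℕ) := Finset.range (2 ^ k) ×ˢ Finset.range (2 ^ k)

/-- A tiling of `Vk k`: a finite collection of nonempty rectangles partitioning `Vk k`. -/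
def IsTiling (k : ℕ) (T : Finset (Finset (ℕ × ℕ))) : Prop :=
  (∀ R ∈ T, ∃ S S' : Finset ℕ, R = S ×ˢ S') ∧
    (∀ R ∈ T, R.Nonempty) ∧ (∀ R ∈ T, R ⊆ Vk k) ∧ ∀ x ∈ Vk k, ∃! R, R ∈ T ∧ x ∈ R

/-- `f`-monochromaticity of a tiling. -/
def Mono {β : Type} (f : ℕ × ℕ → β) (T : Finset (Finset (ℕ × ℕ))) : Prop :=
  ∀ R ∈ T, ∀ x ∈ R, ∀ y ∈ R, f x = f y

/-- The tile of `T` containing `x` (union of all tiles containing `x`; for a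
tiling this is exactly the unique tile containing `x`). -/
def tileOf (T : Finset (Finset (ℕ × ℕ))) (x : ℕ × ℕ) : Finset (ℕ × ℕ) :=
  (T.filter fun R => x ∈ R).sup id

/-- The ideal region of `x`: the level set of `f x` inside `Vk k`. -/
def ideal {β : Type} [DecidableEq β] (k : ℕ) (f : ℕ × ℕ → β) (x : ℕ × ℕ) : Finset (ℕ × ℕ) :=
  (Vk k).filter fun y => f y = f x

/-- Average-case objective PAR of a tiling w.r.t. the uniform distribution. -/
def avgObjPAR {β : Type} [DecidableEq β] (k : ℕ) (f : ℕ × ℕ → β)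
    (T : Finset (Finset (ℕ × ℕ))) : ℚ :=
  (∑ x ∈ Vk k, ((ideal k f x).card : ℚ) / ((tileOf T x).card : ℚ)) / 2 ^ (2 * k)

/-- Average-case PAR with respect to party 1. -/
def avgPAR1 {β : Type} [DecidableEq β] (k : ℕ) (f : ℕ × ℕ → β)
    (T : Finset (Finset (ℕ × ℕ))) : ℚ :=
  (∑ x ∈ Vk k,
      (((Finset.range (2 ^ k)).filter fun y => f (x.1, y) = f x).card : ℚ) /
        (((Finset.range (2 ^ k)).filter fun y => (x.1, y) ∈ tileOf T x).card : ℚ)) /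
    2 ^ (2 * k)

/-- Average-case PAR with respect to party 2. -/
def avgPAR2 {β : Type} [DecidableEq β] (k : ℕ) (f : ℕ × ℕ → β)
    (T : Finset (Finset (ℕ × ℕ))) : ℚ :=
  (∑ x ∈ Vk k,
      (((Finset.range (2 ^ k)).filter fun y => f (y, x.2) = f x).card : ℚ) /
        (((Finset.range (2 ^ k)).filter fun y => (y, x.2) ∈ tileOf T x).card : ℚ)) /
    2 ^ (2 * k)

/-- The millionaires function: `1` if `x1 ≥ x2`, else `2`. -/
def Mil (x : ℕ × ℕ) : ℕ := if x.2 ≤ x.1 then 1 else 2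

/-- The second-price auction function. -/
def Auc (x : ℕ × ℕ) : ℕ × ℕ := if x.2 ≤ x.1 then (1, x.2) else (2, x.1)

/-- Translate a tile by `(a, a)`. -/
def shiftTile (a : ℕ) (R : Finset (ℕ × ℕ)) : Finset (ℕ × ℕ) :=
  R.image fun p => (p.1 + a, p.2 + a)

/-- The bisection-protocol tiling `B_k`. -/
def Btile : ℕ → Finset (Finset (ℕ × ℕ))
  | 0 => {{(0, 0)}}
  | j + 1 =>
    Btile j ∪ (Btile j).image (shiftTile (2 ^ j)) ∪
      {Finset.range (2 ^ j) ×ˢ Finset.Ico (2 ^ j) (2 ^ (j + 1)),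
        Finset.Ico (2 ^ j) (2 ^ (j + 1)) ×ˢ Finset.range (2 ^ j)}

/-- The bounded-bisection-auction tiling `T_{c,i}`. -/
def BBA : ℕ → ℕ → Finset (Finset (ℕ × ℕ))
  | 0, i =>
    (Finset.range (2 ^ i)).image (fun p => Finset.Ico p (2 ^ i) ×ˢ ({p} : Finset ℕ)) ∪
      (Finset.range (2 ^ i - 1)).image fun p => ({p} : Finset ℕ) ×ˢ Finset.Ico (p + 1) (2 ^ i)
  | c + 1, i =>
    BBA c i ∪ (BBA c i).image (shiftTile (2 ^ (c + i))) ∪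
      (Finset.range (2 ^ (c + i))).image
        (fun j => Finset.Ico (2 ^ (c + i)) (2 ^ (c + i + 1)) ×ˢ ({j} : Finset ℕ)) ∪
      (Finset.range (2 ^ (c + i))).image fun j =>
        ({j} : Finset ℕ) ×ˢ Finset.Ico (2 ^ (c + i)) (2 ^ (c + i + 1))

/-- The public-good function: `true` iff `x1 + x2 ≥ 2^k − 1` ("Build"). -/
def PG (k : ℕ) (x : ℕ × ℕ) : Bool := decide (2 ^ k - 1 ≤ x.1 + x.2)

/-- The truthful public-good function: `none` = "Do Not Build". -/
def TPG (c : ℕ) (x : ℕ × ℕ) : Option (ℕ × ℕ) :=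
  if x.1 + x.2 < c then none else some (c - x.2, c - x.1)

/-- The tiling of `Vk k` into singleton cells (sealed-bid auction). -/
def sealedTiling (k : ℕ) : Finset (Finset (ℕ × ℕ)) :=
  (Vk k).image fun x => ({x} : Finset (ℕ × ℕ))

/-! ### auxiliary development -/


def s1 : ℕ → ℕ × ℕ → Finset ℕ
  | 0, _ => {0}
  | k+1, x =>
    if x.1 < 2^k then
      (if x.2 < 2^k then s1 k x else {x.1})
    else
      (if x.2 < 2^k then Finset.Ico (2^k) (2^(k+1))
       else (s1 k (x.1 - 2^k, x.2 - 2^k)).image (· + 2^k))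

def s2 : ℕ → ℕ × ℕ → Finset ℕ
  | 0, _ => {0}
  | k+1, x =>
    if x.1 < 2^k then
      (if x.2 < 2^k then s2 k x else Finset.Ico (2^k) (2^(k+1)))
    else
      (if x.2 < 2^k then {x.2}
       else (s2 k (x.1 - 2^k, x.2 - 2^k)).image (· + 2^k))

lemma pow_succ_two (k : ℕ) : (2:ℕ)^(k+1) = 2^k + 2^k := by
  rw [pow_succ]; omega

lemma mem_Vk {k : ℕ} {x : ℕ × ℕ} : x ∈ Vk k ↔ x.1 < 2^k ∧ x.2 < 2^k := by
  simp [Vk]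

/-- basic properties of s1, s2 -/
lemma s_props : ∀ k, ∀ x ∈ Vk k,
    s1 k x ⊆ Finset.range (2^k) ∧ s2 k x ⊆ Finset.range (2^k) ∧
    x.1 ∈ s1 k x ∧ x.2 ∈ s2 k x := by
  intro k
  induction k with
  | zero =>
    intro x hx
    rw [mem_Vk] at hx
    have h1 : x.1 = 0 := by omega
    have h2 : x.2 = 0 := by omega
    simp [s1, s2, h1, h2]
  | succ k ih =>
    intro x hx
    rw [mem_Vk] at hx
    by_cases ha : x.1 < 2^k <;> by_cases hb : x.2 < 2^k
    · have := ih x (mem_Vk.2 ⟨ha, hb⟩)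
      simp only [s1, s2, if_pos ha, if_pos hb]
      refine ⟨this.1.trans ?_, this.2.1.trans ?_, this.2.2⟩ <;>
        · intro t ht; simp only [mem_range] at *; have := pow_succ_two k; omega
    · simp only [s1, s2, if_pos ha, if_neg hb]
      have h2 := pow_succ_two k
      refine ⟨?_, ?_, ?_, ?_⟩
      · intro t ht; simp only [mem_singleton] at ht; simp [ht]; omega
      · intro t ht; simp only [mem_Ico, mem_range] at *; omega
      · simp
      · simp only [mem_Ico]; omega
    · simp only [s1, s2, if_neg ha, if_pos hb]
      have h2 := pow_succ_two k
      refine ⟨?_, ?_, ?_, ?_⟩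
      · intro t ht; simp only [mem_Ico, mem_range] at *; omega
      · intro t ht; simp only [mem_singleton] at ht; simp [ht]; omega
      · simp only [mem_Ico]; omega
      · simp
    · have hx' : (x.1 - 2^k, x.2 - 2^k) ∈ Vk k := by
        rw [mem_Vk]; have := pow_succ_two k; constructor <;> simp <;> omega
      have H := ih _ hx'
      simp only [s1, s2, if_neg ha, if_neg hb]
      have h2 := pow_succ_two k
      refine ⟨?_, ?_, ?_, ?_⟩
      · intro t ht
        simp only [mem_image] at ht
        obtain ⟨u, hu, rfl⟩ := ht
        have := H.1 hu; simp only [mem_range] at *; omega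
      · intro t ht
        simp only [mem_image] at ht
        obtain ⟨u, hu, rfl⟩ := ht
        have := H.2.1 hu; simp only [mem_range] at *; omega
      · simp only [mem_image]
        exact ⟨x.1 - 2^k, H.2.2.1, by omega⟩
      · simp only [mem_image]
        exact ⟨x.2 - 2^k, H.2.2.2, by omega⟩

/-! ### tileOf machinery -/

lemma tileOf_union (A B : Finset (Finset (ℕ × ℕ))) (x : ℕ × ℕ) :
    tileOf (A ∪ B) x = tileOf A x ∪ tileOf B x := by
  simp only [tileOf, Finset.filter_union, Finset.sup_union, Finset.sup_eq_union]

lemma tileOf_eq_empty {T : Finset (Finset (ℕ × ℕ))} {x : ℕ × ℕ}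
    (h : ∀ R ∈ T, x ∉ R) : tileOf T x = ∅ := by
  rw [tileOf, Finset.filter_false_of_mem h, Finset.sup_empty]; rfl

lemma mem_shiftTile {a : ℕ} {R : Finset (ℕ × ℕ)} {x : ℕ × ℕ} :
    x ∈ shiftTile a R ↔ ∃ p ∈ R, p.1 + a = x.1 ∧ p.2 + a = x.2 := by
  simp [shiftTile, Prod.ext_iff]

lemma shiftTile_union (a : ℕ) (A B : Finset (ℕ × ℕ)) :
    shiftTile a (A ∪ B) = shiftTile a A ∪ shiftTile a B :=
  Finset.image_union _ _

lemma sup_shiftTile (a : ℕ) (S : Finset (Finset (ℕ × ℕ))) :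
    S.sup (shiftTile a) = shiftTile a (S.sup id) := by
  induction S using Finset.induction_on with
  | empty => simp [shiftTile]
  | insert _ _ h ih =>
    rw [Finset.sup_insert, Finset.sup_insert, ih]
    simp only [Finset.sup_eq_union, id]
    exact (shiftTile_union a _ _).symm

lemma shiftTile_product (a : ℕ) (S T : Finset ℕ) :
    shiftTile a (S ×ˢ T) = (S.image (· + a)) ×ˢ (T.image (· + a)) := by
  ext x
  simp only [mem_shiftTile, Finset.mem_product, Finset.mem_image]
  constructor
  · rintro ⟨p, ⟨h1, h2⟩, h3, h4⟩
    exact ⟨⟨p.1, h1, h3⟩, ⟨p.2, h2, h4⟩⟩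
  · rintro ⟨⟨u, hu, hux⟩, ⟨v, hv, hvx⟩⟩
    exact ⟨(u, v), ⟨hu, hv⟩, hux, hvx⟩

lemma BBA_succ (k : ℕ) : BBA (k+1) 0 =
    BBA k 0 ∪ (BBA k 0).image (shiftTile (2^k)) ∪
      (Finset.range (2^k)).image
        (fun j => Finset.Ico (2^k) (2^(k+1)) ×ˢ ({j} : Finset ℕ)) ∪
      (Finset.range (2^k)).image
        (fun j => ({j} : Finset ℕ) ×ˢ Finset.Ico (2^k) (2^(k+1))) := by
  simp [BBA]

lemma BBA_subset : ∀ k, ∀ R ∈ BBA k 0, R ⊆ Vk k := by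
  intro k
  induction k with
  | zero =>
    intro R hR
    simp only [BBA] at hR
    simp only [pow_zero, Finset.range_one, Nat.sub_self, Finset.range_zero,
      Finset.image_empty, Finset.union_empty, Finset.image_singleton] at hR
    simp only [Finset.mem_singleton] at hR
    subst hR
    intro x hx
    simp only [Finset.mem_product, Finset.mem_Ico, Finset.mem_singleton] at hx
    rw [mem_Vk]; simp; omega
  | succ k ih =>
    intro R hR
    rw [BBA_succ] at hR
    have h2 := pow_succ_two k
    simp only [Finset.mem_union, Finset.mem_image] at hR
    rcases hR with ((hR | hR) | hR) | hR
    · intro x hx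
      have := ih R hR hx
      rw [mem_Vk] at *
      omega
    · obtain ⟨R', hR', rfl⟩ := hR
      intro x hx
      rw [mem_shiftTile] at hx
      obtain ⟨p, hp, h3, h4⟩ := hx
      have := ih R' hR' hp
      rw [mem_Vk] at *
      omega
    · obtain ⟨j, hj, rfl⟩ := hR
      intro x hx
      simp only [Finset.mem_product, Finset.mem_Ico, Finset.mem_singleton] at hx
      simp only [Finset.mem_range] at hj
      rw [mem_Vk]; omega
    · obtain ⟨j, hj, rfl⟩ := hR
      intro x hx
      simp only [Finset.mem_product, Finset.mem_Ico, Finset.mem_singleton] at hx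
      simp only [Finset.mem_range] at hj
      rw [mem_Vk]; omega

lemma tile_eq : ∀ k, ∀ x ∈ Vk k, tileOf (BBA k 0) x = s1 k x ×ˢ s2 k x := by
  intro k
  induction k with
  | zero =>
    intro x hx
    rw [mem_Vk] at hx
    have h1 : x.1 = 0 := by omega
    have h2 : x.2 = 0 := by omega
    have hx0 : x = (0, 0) := Prod.ext h1 h2
    subst hx0
    decide
  | succ k ih =>
    intro x hx
    rw [mem_Vk] at hx
    have h2 := pow_succ_two k
    rw [BBA_succ, tileOf_union, tileOf_union, tileOf_union]
    by_cases ha : x.1 < 2^k <;> by_cases hb : x.2 < 2^k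
    · -- Q00
      have e1 : tileOf ((BBA k 0).image (shiftTile (2^k))) x = ∅ := by
        apply tileOf_eq_empty
        intro R hR hxR
        simp only [Finset.mem_image] at hR
        obtain ⟨R', _, rfl⟩ := hR
        rw [mem_shiftTile] at hxR
        obtain ⟨p, _, h3, _⟩ := hxR
        omega
      have e2 : tileOf ((Finset.range (2^k)).image
          (fun j => Finset.Ico (2^k) (2^(k+1)) ×ˢ ({j} : Finset ℕ))) x = ∅ := by
        apply tileOf_eq_empty
        intro R hR hxR
        simp only [Finset.mem_image] at hR
        obtain ⟨j, _, rfl⟩ := hR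
        simp only [Finset.mem_product, Finset.mem_Ico] at hxR
        omega
      have e3 : tileOf ((Finset.range (2^k)).image
          (fun j => ({j} : Finset ℕ) ×ˢ Finset.Ico (2^k) (2^(k+1)))) x = ∅ := by
        apply tileOf_eq_empty
        intro R hR hxR
        simp only [Finset.mem_image] at hR
        obtain ⟨j, _, rfl⟩ := hR
        simp only [Finset.mem_product, Finset.mem_Ico] at hxR
        omega
      rw [e1, e2, e3, ih x (mem_Vk.2 ⟨ha, hb⟩)]
      simp only [Finset.union_empty]
      show _ = s1 (k+1) x ×ˢ s2 (k+1) x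
      simp only [s1, s2, if_pos ha, if_pos hb]
    · -- Q01 : x.1 < 2^k, x.2 ≥ 2^k : column tile
      have e0 : tileOf (BBA k 0) x = ∅ := by
        apply tileOf_eq_empty
        intro R hR hxR
        have := BBA_subset k R hR hxR
        rw [mem_Vk] at this; omega
      have e1 : tileOf ((BBA k 0).image (shiftTile (2^k))) x = ∅ := by
        apply tileOf_eq_empty
        intro R hR hxR
        simp only [Finset.mem_image] at hR
        obtain ⟨R', _, rfl⟩ := hR
        rw [mem_shiftTile] at hxR
        obtain ⟨p, _, h3, _⟩ := hxR
        omega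
      have e2 : tileOf ((Finset.range (2^k)).image
          (fun j => Finset.Ico (2^k) (2^(k+1)) ×ˢ ({j} : Finset ℕ))) x = ∅ := by
        apply tileOf_eq_empty
        intro R hR hxR
        simp only [Finset.mem_image] at hR
        obtain ⟨j, _, rfl⟩ := hR
        simp only [Finset.mem_product, Finset.mem_Ico] at hxR
        omega
      have e3 : tileOf ((Finset.range (2^k)).image
          (fun j => ({j} : Finset ℕ) ×ˢ Finset.Ico (2^k) (2^(k+1)))) x
          = ({x.1} : Finset ℕ) ×ˢ Finset.Ico (2^k) (2^(k+1)) := by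
        rw [tileOf, Finset.filter_image]
        have : (Finset.range (2^k)).filter
            (fun j => x ∈ ({j} : Finset ℕ) ×ˢ Finset.Ico (2^k) (2^(k+1))) = {x.1} := by
          ext j
          simp only [Finset.mem_filter, Finset.mem_range, Finset.mem_product,
            Finset.mem_singleton, Finset.mem_Ico]
          omega
        rw [this, Finset.image_singleton, Finset.sup_singleton, id]
      rw [e0, e1, e2, e3]
      simp only [Finset.empty_union]
      show _ = s1 (k+1) x ×ˢ s2 (k+1) x
      simp only [s1, s2, if_pos ha, if_neg hb]
    · -- Q10 : x.1 ≥ 2^k, x.2 < 2^k : row tile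
      have e0 : tileOf (BBA k 0) x = ∅ := by
        apply tileOf_eq_empty
        intro R hR hxR
        have := BBA_subset k R hR hxR
        rw [mem_Vk] at this; omega
      have e1 : tileOf ((BBA k 0).image (shiftTile (2^k))) x = ∅ := by
        apply tileOf_eq_empty
        intro R hR hxR
        simp only [Finset.mem_image] at hR
        obtain ⟨R', _, rfl⟩ := hR
        rw [mem_shiftTile] at hxR
        obtain ⟨p, _, _, h4⟩ := hxR
        omega
      have e3 : tileOf ((Finset.range (2^k)).image
          (fun j => ({j} : Finset ℕ) ×ˢ Finset.Ico (2^k) (2^(k+1)))) x = ∅ := by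
        apply tileOf_eq_empty
        intro R hR hxR
        simp only [Finset.mem_image] at hR
        obtain ⟨j, _, rfl⟩ := hR
        simp only [Finset.mem_product, Finset.mem_Ico] at hxR
        omega
      have e2 : tileOf ((Finset.range (2^k)).image
          (fun j => Finset.Ico (2^k) (2^(k+1)) ×ˢ ({j} : Finset ℕ))) x
          = Finset.Ico (2^k) (2^(k+1)) ×ˢ ({x.2} : Finset ℕ) := by
        rw [tileOf, Finset.filter_image]
        have : (Finset.range (2^k)).filter
            (fun j => x ∈ Finset.Ico (2^k) (2^(k+1)) ×ˢ ({j} : Finset ℕ)) = {x.2} := by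
          ext j
          simp only [Finset.mem_filter, Finset.mem_range, Finset.mem_product,
            Finset.mem_singleton, Finset.mem_Ico]
          omega
        rw [this, Finset.image_singleton, Finset.sup_singleton, id]
      rw [e0, e1, e2, e3]
      simp only [Finset.empty_union, Finset.union_empty]
      show _ = s1 (k+1) x ×ˢ s2 (k+1) x
      simp only [s1, s2, if_neg ha, if_pos hb]
    · -- Q11
      have e0 : tileOf (BBA k 0) x = ∅ := by
        apply tileOf_eq_empty
        intro R hR hxR
        have := BBA_subset k R hR hxR
        rw [mem_Vk] at this; omega
      have e2 : tileOf ((Finset.range (2^k)).image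
          (fun j => Finset.Ico (2^k) (2^(k+1)) ×ˢ ({j} : Finset ℕ))) x = ∅ := by
        apply tileOf_eq_empty
        intro R hR hxR
        simp only [Finset.mem_image] at hR
        obtain ⟨j, hj, rfl⟩ := hR
        simp only [Finset.mem_range] at hj
        simp only [Finset.mem_product, Finset.mem_Ico, Finset.mem_singleton] at hxR
        omega
      have e3 : tileOf ((Finset.range (2^k)).image
          (fun j => ({j} : Finset ℕ) ×ˢ Finset.Ico (2^k) (2^(k+1)))) x = ∅ := by
        apply tileOf_eq_empty
        intro R hR hxR
        simp only [Finset.mem_image] at hR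
        obtain ⟨j, hj, rfl⟩ := hR
        simp only [Finset.mem_range] at hj
        simp only [Finset.mem_product, Finset.mem_Ico, Finset.mem_singleton] at hxR
        omega
      have hx' : (x.1 - 2^k, x.2 - 2^k) ∈ Vk k := by
        rw [mem_Vk]; constructor <;> simp <;> omega
      have e1 : tileOf ((BBA k 0).image (shiftTile (2^k))) x
          = shiftTile (2^k) (tileOf (BBA k 0) (x.1 - 2^k, x.2 - 2^k)) := by
        rw [tileOf, Finset.filter_image, Finset.sup_image]
        have : ((BBA k 0).filter fun R => x ∈ shiftTile (2^k) R)
            = (BBA k 0).filter fun R => (x.1 - 2^k, x.2 - 2^k) ∈ R := by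
          apply Finset.filter_congr
          intro R _
          rw [mem_shiftTile]
          constructor
          · rintro ⟨p, hp, h3, h4⟩
            have : p = (x.1 - 2^k, x.2 - 2^k) := Prod.ext (by omega) (by omega)
            rwa [← this]
          · intro hp
            exact ⟨_, hp, by simp; omega, by simp; omega⟩
        rw [this]
        have : Function.comp id (shiftTile (2^k)) = shiftTile (2^k) := rfl
        rw [show (id ∘ shiftTile (2^k)) = shiftTile (2^k) from rfl, sup_shiftTile]
        rfl
      rw [e0, e1, e2, e3, ih _ hx', shiftTile_product]
      simp only [Finset.empty_union, Finset.union_empty]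
      show _ = s1 (k+1) x ×ˢ s2 (k+1) x
      simp only [s1, s2, if_neg ha, if_neg hb]

/-! ### numerators and denominators -/

lemma denom1_eq {k : ℕ} {x : ℕ × ℕ} (hx : x ∈ Vk k) :
    (Finset.range (2^k)).filter (fun y => (x.1, y) ∈ tileOf (BBA k 0) x) = s2 k x := by
  obtain ⟨hsub1, hsub2, hm1, hm2⟩ := s_props k x hx
  rw [tile_eq k x hx]
  ext y
  simp only [Finset.mem_filter, Finset.mem_range, Finset.mem_product]
  constructor
  · rintro ⟨_, _, h⟩; exact h
  · intro h
    refine ⟨?_, hm1, h⟩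
    have := hsub2 h; simpa using this

lemma denom2_eq {k : ℕ} {x : ℕ × ℕ} (hx : x ∈ Vk k) :
    (Finset.range (2^k)).filter (fun y => (y, x.2) ∈ tileOf (BBA k 0) x) = s1 k x := by
  obtain ⟨hsub1, hsub2, hm1, hm2⟩ := s_props k x hx
  rw [tile_eq k x hx]
  ext y
  simp only [Finset.mem_filter, Finset.mem_range, Finset.mem_product]
  constructor
  · rintro ⟨_, h, _⟩; exact h
  · intro h
    refine ⟨?_, h, hm2⟩
    have := hsub1 h; simpa using this

lemma numer1_eq {k : ℕ} {x : ℕ × ℕ} (hx : x ∈ Vk k) :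
    (Finset.range (2^k)).filter (fun y => Auc (x.1, y) = Auc x) =
      if x.2 ≤ x.1 then {x.2} else Finset.Ico (x.1 + 1) (2^k) := by
  rw [mem_Vk] at hx
  by_cases h : x.2 ≤ x.1
  · rw [if_pos h]
    ext y
    simp only [Finset.mem_filter, Finset.mem_range, Finset.mem_singleton, Auc, if_pos h]
    split_ifs with h2 <;> simp [Prod.ext_iff] <;> omega
  · rw [if_neg h]
    ext y
    simp only [Finset.mem_filter, Finset.mem_range, Finset.mem_Ico, Auc, if_neg h]
    split_ifs with h2 <;> simp [Prod.ext_iff] <;> omega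

lemma numer2_eq {k : ℕ} {x : ℕ × ℕ} (hx : x ∈ Vk k) :
    (Finset.range (2^k)).filter (fun y => Auc (y, x.2) = Auc x) =
      if x.2 ≤ x.1 then Finset.Ico x.2 (2^k) else {x.1} := by
  rw [mem_Vk] at hx
  by_cases h : x.2 ≤ x.1
  · rw [if_pos h]
    ext y
    simp only [Finset.mem_filter, Finset.mem_range, Finset.mem_Ico, Auc, if_pos h]
    split_ifs with h2 <;> simp [Prod.ext_iff] <;> omega
  · rw [if_neg h]
    ext y
    simp only [Finset.mem_filter, Finset.mem_range, Finset.mem_singleton, Auc, if_neg h]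
    split_ifs with h2 <;> simp [Prod.ext_iff] <;> omega

/-! ### rational-valued numerators, main sums -/

def n1 (k : ℕ) (x : ℕ × ℕ) : ℚ := if x.2 ≤ x.1 then 1 else 2^k - (x.1 + 1)
def n2 (k : ℕ) (x : ℕ × ℕ) : ℚ := if x.2 ≤ x.1 then 2^k - x.2 else 1

def A1 (k : ℕ) : ℚ := ∑ x ∈ Vk k, n1 k x / ((s2 k x).card : ℚ)
def A2 (k : ℕ) : ℚ := ∑ x ∈ Vk k, n2 k x / ((s1 k x).card : ℚ)

def Usum (k : ℕ) : ℚ := ∑ x ∈ Vk k, if x.1 < x.2 then 1 / ((s2 k x).card : ℚ) else 0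
def Wsum (k : ℕ) : ℚ := ∑ x ∈ Vk k, if x.2 ≤ x.1 then 1 / ((s1 k x).card : ℚ) else 0

lemma two_pow_two_mul (k : ℕ) : (2 : ℚ) ^ (2 * k) = 4 ^ k := by
  rw [pow_mul]; norm_num

lemma avgPAR1_eq (k : ℕ) : avgPAR1 k Auc (BBA k 0) = A1 k / 4 ^ k := by
  rw [avgPAR1, two_pow_two_mul, A1]
  congr 1
  apply Finset.sum_congr rfl
  intro x hx
  rw [denom1_eq hx, numer1_eq hx]
  have hx' := mem_Vk.1 hx
  congr 1
  by_cases h : x.2 ≤ x.1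
  · simp [n1, if_pos h]
  · rw [if_neg h, n1, if_neg h, Nat.card_Ico]
    have : x.1 + 1 ≤ 2^k := by omega
    push_cast [this]
    ring

lemma avgPAR2_eq (k : ℕ) : avgPAR2 k Auc (BBA k 0) = A2 k / 4 ^ k := by
  rw [avgPAR2, two_pow_two_mul, A2]
  congr 1
  apply Finset.sum_congr rfl
  intro x hx
  rw [denom2_eq hx, numer2_eq hx]
  have hx' := mem_Vk.1 hx
  congr 1
  by_cases h : x.2 ≤ x.1
  · rw [if_pos h, n2, if_pos h, Nat.card_Ico]
    have : x.2 ≤ 2^k := by omega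
    push_cast [this]
    ring
  · simp [n2, if_neg h]

/-! ### quadrant values -/

lemma s2_00 {k : ℕ} {x : ℕ × ℕ} (h1 : x.1 < 2^k) (h2 : x.2 < 2^k) :
    s2 (k+1) x = s2 k x := by
  simp [s2, if_pos h1, if_pos h2]

lemma s2_01 {k a b : ℕ} (h1 : a < 2^k) :
    s2 (k+1) (a, 2^k + b) = Finset.Ico (2^k) (2^(k+1)) := by
  simp only [s2]
  rw [if_pos h1, if_neg (by omega)]

lemma s2_10 {k a b : ℕ} (h2 : b < 2^k) :
    s2 (k+1) (2^k + a, b) = {b} := by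
  simp only [s2]
  rw [if_neg (by omega), if_pos h2]

lemma s2_11 {k a b : ℕ} :
    s2 (k+1) (2^k + a, 2^k + b) = (s2 k (a, b)).image (· + 2^k) := by
  simp only [s2]
  rw [if_neg (by omega), if_neg (by omega)]
  congr 1 <;> simp [Nat.add_sub_cancel_left]

lemma s1_00 {k : ℕ} {x : ℕ × ℕ} (h1 : x.1 < 2^k) (h2 : x.2 < 2^k) :
    s1 (k+1) x = s1 k x := by
  simp [s1, if_pos h1, if_pos h2]

lemma s1_01 {k a b : ℕ} (h1 : a < 2^k) :
    s1 (k+1) (a, 2^k + b) = {a} := by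
  simp only [s1]
  rw [if_pos h1, if_neg (by omega)]

lemma s1_10 {k a b : ℕ} (h2 : b < 2^k) :
    s1 (k+1) (2^k + a, b) = Finset.Ico (2^k) (2^(k+1)) := by
  simp only [s1]
  rw [if_neg (by omega), if_pos h2]

lemma s1_11 {k a b : ℕ} :
    s1 (k+1) (2^k + a, 2^k + b) = (s1 k (a, b)).image (· + 2^k) := by
  simp only [s1]
  rw [if_neg (by omega), if_neg (by omega)]
  congr 1 <;> simp [Nat.add_sub_cancel_left]

lemma card_image_add (S : Finset ℕ) (c : ℕ) : (S.image (· + c)).card = S.card :=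
  Finset.card_image_of_injective _ (add_left_injective c)

lemma card_Ico_pow (k : ℕ) : (Finset.Ico ((2:ℕ)^k) (2^(k+1))).card = 2^k := by
  rw [Nat.card_Ico, pow_succ, mul_two, Nat.add_sub_cancel]

/-! ### splitting the sum over quadrants -/

lemma sum_Vk_split (k : ℕ) (f : ℕ × ℕ → ℚ) :
    ∑ x ∈ Vk (k+1), f x =
      ∑ x ∈ Vk k, f x + ∑ x ∈ Vk k, f (x.1, 2^k + x.2) +
        ∑ x ∈ Vk k, f (2^k + x.1, x.2) + ∑ x ∈ Vk k, f (2^k + x.1, 2^k + x.2) := by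
  have hr : Finset.range (2^(k+1)) = Finset.range (2^k + 2^k) := by rw [pow_succ_two]
  rw [Vk, Vk, hr, Finset.sum_product, Finset.sum_product, Finset.sum_product,
    Finset.sum_product, Finset.sum_product]
  rw [Finset.sum_range_add (fun a => ∑ b ∈ Finset.range (2^k + 2^k), f (a, b)) (2^k) (2^k)]
  have : ∀ g : ℕ → ℚ, ∑ b ∈ Finset.range (2^k + 2^k), g b
      = ∑ b ∈ Finset.range (2^k), g b + ∑ b ∈ Finset.range (2^k), g (2^k + b) :=
    fun g => Finset.sum_range_add g (2^k) (2^k)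
  rw [Finset.sum_congr rfl (fun a _ => this (fun b => f (a, b))),
    Finset.sum_congr rfl (fun a _ => this (fun b => f (2^k + a, b))),
    Finset.sum_add_distrib, Finset.sum_add_distrib]
  ring

/-! ### small computations -/

lemma Vk_zero : Vk 0 = {((0:ℕ), (0:ℕ))} := by decide

lemma gauss (n : ℕ) : ∑ i ∈ Finset.range n, (i : ℚ) = n * (n - 1) / 2 := by
  induction n with
  | zero => simp
  | succ n ih => rw [Finset.sum_range_succ, ih]; push_cast; ring

lemma iteDiv (c : ℚ) (P : Prop) [Decidable P] (v : ℚ) :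
    (if P then v else 0) / c = v * (if P then 1 / c else 0) := by
  split_ifs
  · rw [one_div, div_eq_mul_inv]
  · simp

lemma four_pow (k : ℕ) : (4 : ℚ)^k = 2^k * 2^k := by
  rw [← mul_pow]; norm_num

/-! ### values of n1, n2 on quadrants -/

lemma n1_00 {k : ℕ} {x : ℕ × ℕ} (h1 : x.1 < 2^k) :
    n1 (k+1) x = n1 k x + if x.1 < x.2 then (2:ℚ)^k else 0 := by
  simp only [n1]
  rcases le_or_gt x.2 x.1 with h | h
  · rw [if_pos h, if_pos h, if_neg (by omega), add_zero]
  · rw [if_neg (by omega), if_neg (by omega), if_pos h, pow_succ]; ring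

lemma n1_01 {k a b : ℕ} (h1 : a < 2^k) :
    n1 (k+1) (a, 2^k + b) = 2^(k+1) - (a + 1) := by
  simp only [n1]
  rw [if_neg (by omega)]

lemma n1_10 {k a b : ℕ} (h2 : b < 2^k) :
    n1 (k+1) (2^k + a, b) = 1 := by
  simp only [n1]
  rw [if_pos (by omega)]

lemma n1_11 {k : ℕ} {x : ℕ × ℕ} :
    n1 (k+1) (2^k + x.1, 2^k + x.2) = n1 k x := by
  simp only [n1]
  rcases le_or_gt x.2 x.1 with h | h
  · rw [if_pos (by omega), if_pos h]
  · rw [if_neg (by omega), if_neg (by omega), pow_succ]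
    push_cast; ring

lemma n2_00 {k : ℕ} {x : ℕ × ℕ} (h2 : x.2 < 2^k) :
    n2 (k+1) x = n2 k x + if x.2 ≤ x.1 then (2:ℚ)^k else 0 := by
  simp only [n2]
  rcases le_or_gt x.2 x.1 with h | h
  · rw [if_pos h, if_pos h, if_pos h, pow_succ]; ring
  · rw [if_neg (by omega), if_neg (by omega), if_neg (by omega), add_zero]

lemma n2_01 {k a b : ℕ} (h1 : a < 2^k) :
    n2 (k+1) (a, 2^k + b) = 1 := by
  simp only [n2]
  rw [if_neg (by omega)]

lemma n2_10 {k a b : ℕ} (h2 : b < 2^k) :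
    n2 (k+1) (2^k + a, b) = 2^(k+1) - b := by
  simp only [n2]
  rw [if_pos (by omega)]

lemma n2_11 {k : ℕ} {x : ℕ × ℕ} :
    n2 (k+1) (2^k + x.1, 2^k + x.2) = n2 k x := by
  simp only [n2]
  rcases le_or_gt x.2 x.1 with h | h
  · rw [if_pos (by omega), if_pos h, pow_succ]
    push_cast; ring
  · rw [if_neg (by omega), if_neg (by omega)]

lemma card_Vk (k : ℕ) : (Vk k).card = 2^k * 2^k := by simp [Vk]

lemma Usum_succ (k : ℕ) : Usum (k+1) = 2 * Usum k + 2^k := by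
  have hq : ((2:ℚ)^k) ≠ 0 := by positivity
  simp only [Usum, sum_Vk_split]
  have e1 : (∑ x ∈ Vk k, if x.1 < x.2 then 1 / ((s2 (k+1) x).card : ℚ) else 0)
      = ∑ x ∈ Vk k, if x.1 < x.2 then 1 / ((s2 k x).card : ℚ) else 0 := by
    apply Finset.sum_congr rfl
    intro x hx
    obtain ⟨h1, h2⟩ := mem_Vk.1 hx
    rw [s2_00 h1 h2]
  have e2 : (∑ x ∈ Vk k, if x.1 < 2^k + x.2 then 1 / ((s2 (k+1) (x.1, 2^k + x.2)).card : ℚ) else 0)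
      = 2^k := by
    rw [Finset.sum_congr rfl (g := fun _ => 1/((2:ℚ)^k)) (fun x hx => by
      obtain ⟨h1, h2⟩ := mem_Vk.1 hx
      rw [s2_01 h1, card_Ico_pow, if_pos (by omega)]
      push_cast
      ring)]
    rw [Finset.sum_const, card_Vk, nsmul_eq_mul]
    push_cast
    field_simp
  have e3 : (∑ x ∈ Vk k, if 2^k + x.1 < x.2 then 1 / ((s2 (k+1) (2^k + x.1, x.2)).card : ℚ) else 0)
      = 0 := by
    rw [Finset.sum_congr rfl (g := fun _ => (0:ℚ)) (fun x hx => by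
      obtain ⟨h1, h2⟩ := mem_Vk.1 hx
      rw [if_neg (by omega)])]
    rw [Finset.sum_const, smul_zero]
  have e4 : (∑ x ∈ Vk k,
        if 2^k + x.1 < 2^k + x.2 then 1 / ((s2 (k+1) (2^k + x.1, 2^k + x.2)).card : ℚ) else 0)
      = ∑ x ∈ Vk k, if x.1 < x.2 then 1 / ((s2 k x).card : ℚ) else 0 := by
    apply Finset.sum_congr rfl
    intro x hx
    rw [s2_11, card_image_add, Prod.mk.eta]
    simp only [add_lt_add_iff_left]
  rw [e1, e2, e3, e4]
  ring

lemma Wsum_succ (k : ℕ) : Wsum (k+1) = 2 * Wsum k + 2^k := by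
  have hq : ((2:ℚ)^k) ≠ 0 := by positivity
  simp only [Wsum, sum_Vk_split]
  have e1 : (∑ x ∈ Vk k, if x.2 ≤ x.1 then 1 / ((s1 (k+1) x).card : ℚ) else 0)
      = ∑ x ∈ Vk k, if x.2 ≤ x.1 then 1 / ((s1 k x).card : ℚ) else 0 := by
    apply Finset.sum_congr rfl
    intro x hx
    obtain ⟨h1, h2⟩ := mem_Vk.1 hx
    rw [s1_00 h1 h2]
  have e2 : (∑ x ∈ Vk k, if 2^k + x.2 ≤ x.1 then 1 / ((s1 (k+1) (x.1, 2^k + x.2)).card : ℚ) else 0)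
      = 0 := by
    rw [Finset.sum_congr rfl (g := fun _ => (0:ℚ)) (fun x hx => by
      obtain ⟨h1, h2⟩ := mem_Vk.1 hx
      rw [if_neg (by omega)])]
    rw [Finset.sum_const, smul_zero]
  have e3 : (∑ x ∈ Vk k, if x.2 ≤ 2^k + x.1 then 1 / ((s1 (k+1) (2^k + x.1, x.2)).card : ℚ) else 0)
      = 2^k := by
    rw [Finset.sum_congr rfl (g := fun _ => 1/((2:ℚ)^k)) (fun x hx => by
      obtain ⟨h1, h2⟩ := mem_Vk.1 hx
      rw [s1_10 h2, card_Ico_pow, if_pos (by omega)]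
      push_cast
      ring)]
    rw [Finset.sum_const, card_Vk, nsmul_eq_mul]
    push_cast
    field_simp
  have e4 : (∑ x ∈ Vk k,
        if 2^k + x.2 ≤ 2^k + x.1 then 1 / ((s1 (k+1) (2^k + x.1, 2^k + x.2)).card : ℚ) else 0)
      = ∑ x ∈ Vk k, if x.2 ≤ x.1 then 1 / ((s1 k x).card : ℚ) else 0 := by
    apply Finset.sum_congr rfl
    intro x hx
    rw [s1_11, card_image_add, Prod.mk.eta]
    simp only [add_le_add_iff_left]
  rw [e1, e2, e3, e4]
  ring

lemma Usum_eq (k : ℕ) : Usum k = k * 2^k / 2 := by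
  induction k with
  | zero =>
    rw [Usum, Vk_zero, Finset.sum_singleton]
    norm_num
  | succ k ih =>
    rw [Usum_succ, ih]
    push_cast
    ring

lemma Wsum_eq (k : ℕ) : Wsum k = (k + 2) * 2^k / 2 := by
  induction k with
  | zero =>
    rw [Wsum, Vk_zero, Finset.sum_singleton]
    have : s1 0 (0, 0) = {0} := rfl
    rw [if_pos le_rfl, this]
    norm_num
  | succ k ih =>
    rw [Wsum_succ, ih]
    push_cast
    ring

lemma row_sum (k : ℕ) (h : ℕ → ℚ) :
    ∑ x ∈ Vk k, h x.1 = (2^k : ℚ) * ∑ a ∈ Finset.range (2^k), h a := by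
  rw [Vk, Finset.sum_product, Finset.mul_sum]
  apply Finset.sum_congr rfl
  intro a _
  rw [Finset.sum_congr (g := fun _ => h a) rfl (fun b _ => rfl), Finset.sum_const,
    Finset.card_range, nsmul_eq_mul]
  push_cast
  ring

lemma col_sum (k : ℕ) (h : ℕ → ℚ) :
    ∑ x ∈ Vk k, h x.2 = (2^k : ℚ) * ∑ b ∈ Finset.range (2^k), h b := by
  rw [Vk, Finset.sum_product,
    Finset.sum_congr (g := fun _ => ∑ b ∈ Finset.range (2^k), h b) rfl (fun a _ => rfl),
    Finset.sum_const, Finset.card_range, nsmul_eq_mul]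
  push_cast
  ring

lemma A1_succ (k : ℕ) : A1 (k+1) = 2 * A1 k + 2^k * Usum k + 4^k + (3 * 4^k - 2^k) / 2 := by
  have hq : ((2:ℚ)^k) ≠ 0 := by positivity
  simp only [A1, sum_Vk_split]
  have e1 : (∑ x ∈ Vk k, n1 (k+1) x / ((s2 (k+1) x).card : ℚ))
      = (∑ x ∈ Vk k, n1 k x / ((s2 k x).card : ℚ)) +
        2^k * ∑ x ∈ Vk k, (if x.1 < x.2 then 1 / ((s2 k x).card : ℚ) else 0) := by
    rw [Finset.mul_sum, ← Finset.sum_add_distrib]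
    apply Finset.sum_congr rfl
    intro x hx
    obtain ⟨h1, h2⟩ := mem_Vk.1 hx
    rw [s2_00 h1 h2, n1_00 h1, add_div, iteDiv]
  have e2 : (∑ x ∈ Vk k, n1 (k+1) (x.1, 2^k + x.2) / ((s2 (k+1) (x.1, 2^k + x.2)).card : ℚ))
      = (3 * 4^k - 2^k) / 2 := by
    rw [Finset.sum_congr rfl (g := fun x => ((2:ℚ)^(k+1) - ((x.1:ℚ) + 1)) / 2^k) (fun x hx => by
      obtain ⟨h1, h2⟩ := mem_Vk.1 hx
      rw [s2_01 h1, card_Ico_pow, n1_01 h1]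
      push_cast
      ring)]
    rw [row_sum k (fun a => ((2:ℚ)^(k+1) - ((a:ℚ) + 1)) / 2^k)]
    rw [Finset.sum_congr rfl (g := fun a : ℕ => ((2:ℚ)^(k+1) - ((a:ℚ) + 1)) * (1/2^k))
      (fun a _ => by ring)]
    rw [← Finset.sum_mul, Finset.sum_sub_distrib, Finset.sum_add_distrib, Finset.sum_const,
      Finset.sum_const, Finset.card_range, gauss, nsmul_eq_mul, nsmul_eq_mul, four_pow]
    push_cast
    field_simp
    ring
  have e3 : (∑ x ∈ Vk k, n1 (k+1) (2^k + x.1, x.2) / ((s2 (k+1) (2^k + x.1, x.2)).card : ℚ))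
      = 4^k := by
    rw [Finset.sum_congr rfl (g := fun _ => (1:ℚ)) (fun x hx => by
      obtain ⟨h1, h2⟩ := mem_Vk.1 hx
      rw [s2_10 h2, n1_10 h2, Finset.card_singleton]
      norm_num)]
    rw [Finset.sum_const, card_Vk, nsmul_eq_mul, four_pow]
    push_cast
    ring
  have e4 : (∑ x ∈ Vk k, n1 (k+1) (2^k + x.1, 2^k + x.2) / ((s2 (k+1) (2^k + x.1, 2^k + x.2)).card : ℚ))
      = ∑ x ∈ Vk k, n1 k x / ((s2 k x).card : ℚ) := by
    apply Finset.sum_congr rfl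
    intro x hx
    rw [s2_11, card_image_add, Prod.mk.eta, n1_11]
  rw [e1, e2, e3, e4, Usum]
  ring

lemma A2_succ (k : ℕ) : A2 (k+1) = 2 * A2 k + 2^k * Wsum k + 4^k + (3 * 4^k + 2^k) / 2 := by
  have hq : ((2:ℚ)^k) ≠ 0 := by positivity
  simp only [A2, sum_Vk_split]
  have e1 : (∑ x ∈ Vk k, n2 (k+1) x / ((s1 (k+1) x).card : ℚ))
      = (∑ x ∈ Vk k, n2 k x / ((s1 k x).card : ℚ)) +
        2^k * ∑ x ∈ Vk k, (if x.2 ≤ x.1 then 1 / ((s1 k x).card : ℚ) else 0) := by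
    rw [Finset.mul_sum, ← Finset.sum_add_distrib]
    apply Finset.sum_congr rfl
    intro x hx
    obtain ⟨h1, h2⟩ := mem_Vk.1 hx
    rw [s1_00 h1 h2, n2_00 h2, add_div, iteDiv]
  have e2 : (∑ x ∈ Vk k, n2 (k+1) (x.1, 2^k + x.2) / ((s1 (k+1) (x.1, 2^k + x.2)).card : ℚ))
      = 4^k := by
    rw [Finset.sum_congr rfl (g := fun _ => (1:ℚ)) (fun x hx => by
      obtain ⟨h1, h2⟩ := mem_Vk.1 hx
      rw [s1_01 h1, n2_01 h1, Finset.card_singleton]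
      norm_num)]
    rw [Finset.sum_const, card_Vk, nsmul_eq_mul, four_pow]
    push_cast
    ring
  have e3 : (∑ x ∈ Vk k, n2 (k+1) (2^k + x.1, x.2) / ((s1 (k+1) (2^k + x.1, x.2)).card : ℚ))
      = (3 * 4^k + 2^k) / 2 := by
    rw [Finset.sum_congr rfl (g := fun x : ℕ × ℕ => ((2:ℚ)^(k+1) - (x.2:ℚ)) / 2^k) (fun x hx => by
      obtain ⟨h1, h2⟩ := mem_Vk.1 hx
      rw [s1_10 h2, card_Ico_pow, n2_10 h2]
      push_cast
      ring)]
    rw [col_sum k (fun b => ((2:ℚ)^(k+1) - (b:ℚ)) / 2^k)]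
    rw [Finset.sum_congr rfl (g := fun b : ℕ => ((2:ℚ)^(k+1) - (b:ℚ)) * (1/2^k))
      (fun b _ => by ring)]
    rw [← Finset.sum_mul, Finset.sum_sub_distrib, Finset.sum_const, Finset.card_range, gauss,
      nsmul_eq_mul, four_pow]
    push_cast
    field_simp
    ring
  have e4 : (∑ x ∈ Vk k, n2 (k+1) (2^k + x.1, 2^k + x.2) / ((s1 (k+1) (2^k + x.1, 2^k + x.2)).card : ℚ))
      = ∑ x ∈ Vk k, n2 k x / ((s1 k x).card : ℚ) := by
    apply Finset.sum_congr rfl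
    intro x hx
    rw [s1_11, card_image_add, Prod.mk.eta, n2_11]
  rw [e1, e2, e3, e4, Wsum]
  ring

lemma A1_eq (k : ℕ) : A1 k = (4^k * (k + 3) - 2^k * ((k:ℚ) - 1)) / 4 := by
  induction k with
  | zero =>
    rw [A1, Vk_zero, Finset.sum_singleton]
    have h1 : s2 0 (0, 0) = {0} := rfl
    have h2 : n1 0 (0, 0) = 1 := rfl
    rw [h1, h2]
    norm_num
  | succ k ih =>
    rw [A1_succ, Usum_eq, ih]
    simp only [four_pow]
    push_cast
    ring

lemma A2_eq (k : ℕ) : A2 k = (4^k * (k + 5) + 2^k * ((k:ℚ) - 1)) / 4 := by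
  induction k with
  | zero =>
    rw [A2, Vk_zero, Finset.sum_singleton]
    have h1 : s1 0 (0, 0) = {0} := rfl
    have h2 : n2 0 (0, 0) = 1 := by norm_num [n2]
    rw [h1, h2]
    norm_num
  | succ k ih =>
    rw [A2_succ, Wsum_eq, ih]
    simp only [four_pow]
    push_cast
    ring

/-- for the bisection-auction tiling `T_{k,0}` and `A_k`: the
average-case PAR w.r.t. party 1 equals `(k+3)/4 − (k−1)/2^{k+2}`, the
average-case PAR w.r.t. party 2 equals `(k+5)/4 + (k−1)/2^{k+2}`, and hence the
average-case subjective PAR equals `(k+5)/4 + (k−1)/2^{k+2}`. -/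
theorem stmt17 (k : ℕ) (hk : 1 ≤ k) :
    avgPAR1 k Auc (BBA k 0) = ((k : ℚ) + 3) / 4 - ((k : ℚ) - 1) / 2 ^ (k + 2) ∧
      avgPAR2 k Auc (BBA k 0) = ((k : ℚ) + 5) / 4 + ((k : ℚ) - 1) / 2 ^ (k + 2) ∧
      max (avgPAR1 k Auc (BBA k 0)) (avgPAR2 k Auc (BBA k 0)) =
        ((k : ℚ) + 5) / 4 + ((k : ℚ) - 1) / 2 ^ (k + 2) := by
  have hq : ((2:ℚ)^k) ≠ 0 := by positivity
  have H1 : avgPAR1 k Auc (BBA k 0) = ((k : ℚ) + 3) / 4 - ((k : ℚ) - 1) / 2 ^ (k + 2) := by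
    rw [avgPAR1_eq, A1_eq]
    simp only [four_pow]
    field_simp
    ring
  have H2 : avgPAR2 k Auc (BBA k 0) = ((k : ℚ) + 5) / 4 + ((k : ℚ) - 1) / 2 ^ (k + 2) := by
    rw [avgPAR2_eq, A2_eq]
    simp only [four_pow]
    field_simp
    ring
  refine ⟨H1, H2, ?_⟩
  rw [H1, H2]
  rw [max_eq_right]
  have hd : (0:ℚ) ≤ ((k : ℚ) - 1) / 2 ^ (k + 2) := by
    apply div_nonneg
    · have : (1:ℚ) ≤ (k:ℚ) := by exact_mod_cast hk
      linarith
    · positivity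
  linarith
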